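/- arXiv:0805.3118 — 3 statements merged into one kernel-verified Lean document; each statement's English description precedes it below -/
import Mathlib

section
/- Let p, q be coprime positive integers. If x, x' are p-th roots of unity, y, y' are q-th roots of unity, and x − y = x' − y', then x = x' and y = y'. -/
private lemma aux_coprime_root {p q : ℕ} (hpq : Nat.Coprime p q) {z : ℂ}
    (h1 : z ^ p = 1) (h2 : z ^ q = 1) : z = 1 := by
  have hd := Nat.dvd_gcd (orderOf_dvd_of_pow_eq_one h1) (orderOf_dvd_of_pow_eq_one h2)
  rw [hpq] at hd
  exact orderOf_eq_one_iff.mp (Nat.dvd_one.mp hd)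

theorem psk_difference_unique (p q : ℕ) (hp : 0 < p) (hq : 0 < q)
    (hpq : Nat.Coprime p q) (x x' y y' : ℂ)
    (hx : x ^ p = 1) (hx' : x' ^ p = 1) (hy : y ^ q = 1) (hy' : y' ^ q = 1)
    (h : x - y = x' - y') : x = x' ∧ y = y' := by
  have hx0 : x ≠ 0 := fun h0 => by simp [h0, zero_pow hp.ne', eq_comm] at hx
  have hx'0 : x' ≠ 0 := fun h0 => by simp [h0, zero_pow hp.ne', eq_comm] at hx'
  have hy0 : y ≠ 0 := fun h0 => by simp [h0, zero_pow hq.ne', eq_comm] at hy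
  have hy'0 : y' ≠ 0 := fun h0 => by simp [h0, zero_pow hq.ne', eq_comm] at hy'
  suffices hxx : x = x' by
    refine ⟨hxx, ?_⟩
    have h2 := h; rw [hxx] at h2; linear_combination -h2
  by_contra hne
  have hd : x - x' ≠ 0 := sub_ne_zero.mpr hne
  have hdy : y - y' = x - x' := by linear_combination -h
  -- conjugates are inverses
  have cx : (starRingEnd ℂ) x = x⁻¹ :=
    (Complex.inv_eq_conj (Complex.norm_eq_one_of_pow_eq_one hx hp.ne')).symm
  have cx' : (starRingEnd ℂ) x' = x'⁻¹ :=
    (Complex.inv_eq_conj (Complex.norm_eq_one_of_pow_eq_one hx' hp.ne')).symm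
  have cy : (starRingEnd ℂ) y = y⁻¹ :=
    (Complex.inv_eq_conj (Complex.norm_eq_one_of_pow_eq_one hy hq.ne')).symm
  have cy' : (starRingEnd ℂ) y' = y'⁻¹ :=
    (Complex.inv_eq_conj (Complex.norm_eq_one_of_pow_eq_one hy' hq.ne')).symm
  have key : y⁻¹ - y'⁻¹ = x⁻¹ - x'⁻¹ := by
    have h3 := congrArg (starRingEnd ℂ) hdy
    simpa only [map_sub, cx, cx', cy, cy'] using h3
  -- deduce x * x' = y * y'
  have hmul : x * x' = y * y' := by
    have h4 : (x' - x) * (y * y') = (y' - y) * (x * x') := by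
      field_simp at key
      linear_combination -key
    have h5 : (x - x') * (y * y') = (x - x') * (x * x') := by
      linear_combination -h4 + (x * x') * hdy
    exact (mul_left_cancel₀ hd h5).symm
  have hxi : x' = x⁻¹ := by
    have : (x * x') ^ p = 1 := by rw [mul_pow, hx, hx', one_mul]
    have h6 : x * x' = 1 := aux_coprime_root hpq this (by rw [hmul, mul_pow, hy, hy', one_mul])
    exact eq_inv_of_mul_eq_one_right h6
  have hyi : y' = y⁻¹ := by
    have h7 : y * y' = 1 := by
      rw [← hmul]
      exact aux_coprime_root hpq (by rw [mul_pow, hx, hx', one_mul])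
        (by rw [hmul, mul_pow, hy, hy', one_mul])
    exact eq_inv_of_mul_eq_one_right h7
  -- now x - y = x⁻¹ - y⁻¹, so (x - y)(x*y + 1) = 0
  have h8 : (x - y) * (x * y + 1) = 0 := by
    have h9 : x - y = x⁻¹ - y⁻¹ := by rw [h, hxi, hyi]
    have h10 : (x⁻¹ - y⁻¹) * (x * y) = y - x := by field_simp
    linear_combination (x * y) * h9 + h10
  rcases mul_eq_zero.mp h8 with h11 | h11
  · -- x = y, so x is a p-th and q-th root of unity, hence 1
    have hxy : x = y := sub_eq_zero.mp h11
    have hx1 : x = 1 := aux_coprime_root hpq hx (hxy ▸ hy)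
    exact hne (by rw [hxi, hx1, inv_one])
  · -- x * y = -1
    have hxy : x * y = -1 := by linear_combination h11
    have hxq : x ^ q = (-1 : ℂ) ^ q := by
      have : (x * y) ^ q = (-1 : ℂ) ^ q := by rw [hxy]
      rwa [mul_pow, hy, mul_one] at this
    have hx2q : x ^ (2 * q) = 1 := by
      rw [mul_comm, pow_mul, hxq, ← pow_mul, mul_comm, pow_mul, neg_one_sq, one_pow]
    have hop : orderOf x ∣ p := orderOf_dvd_of_pow_eq_one hx
    have hcop : Nat.Coprime (orderOf x) q := Nat.Coprime.coprime_dvd_left hop hpq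
    have h2 : orderOf x ∣ 2 :=
      (Nat.Coprime.dvd_of_dvd_mul_right hcop) (orderOf_dvd_of_pow_eq_one hx2q)
    have hx2 : x ^ 2 = 1 := orderOf_dvd_iff_pow_eq_one.mp h2
    have : x' = x := by
      rw [hxi]
      exact inv_eq_of_mul_eq_one_right (by rw [← sq]; exact hx2)
    exact hne this.symm
end

section
/- Let p, q be coprime positive integers, X the p-th roots of unity, Y the q-th roots of unity. If x, x̃ ∈ X^K, y, ỹ ∈ Y^K, and h, h̃ are complex L-vectors with h ≠ 0, such that x∗h = x̃∗h̃ ≠ 0 and y∗h = ỹ∗h̃, then x = x̃, y = ỹ and h = h̃. -/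
noncomputable def toeplitzEntry {K : ℕ} (s : Fin K → ℂ) (i j : ℕ) : ℂ :=
  if h : j ≤ i ∧ i - j < K then s ⟨i - j, h.2⟩ else 0

noncomputable def toeplitz (K L : ℕ) (s : Fin K → ℂ) :
    Matrix (Fin (K + L - 1)) (Fin L) ℂ :=
  fun i j => toeplitzEntry s i.val j.val

lemma root_ne_zero (p : ℕ) (hp : 0 < p) (z : ℂ) (hz : z ^ p = 1) : z ≠ 0 := by
  intro h0
  rw [h0, zero_pow hp.ne'] at hz
  exact one_ne_zero hz.symm

lemma eq_one_of_pows (p q : ℕ) (hpq : Nat.Coprime p q) (z : ℂ)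
    (h1 : z ^ p = 1) (h2 : z ^ q = 1) : z = 1 := by
  have d1 : orderOf z ∣ p := orderOf_dvd_of_pow_eq_one h1
  have d2 : orderOf z ∣ q := orderOf_dvd_of_pow_eq_one h2
  have hd : orderOf z ∣ Nat.gcd p q := Nat.dvd_gcd d1 d2
  rw [Nat.Coprime] at hpq
  rw [hpq] at hd
  exact orderOf_eq_one_iff.mp (Nat.dvd_one.mp hd)

lemma conj_eq_inv (p : ℕ) (hp : 0 < p) (z : ℂ) (hz : z ^ p = 1) :
    (starRingEnd ℂ) z = z⁻¹ := by
  have habs : ‖z‖ ^ p = 1 := by rw [← norm_pow, hz, norm_one]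
  have h1 : ‖z‖ = 1 := by
    rcases lt_trichotomy (‖z‖) 1 with h | h | h
    · exfalso
      have := pow_lt_one₀ (norm_nonneg z) h hp.ne'
      rw [habs] at this; exact lt_irrefl 1 this
    · exact h
    · exfalso
      have := one_lt_pow₀ h hp.ne'
      rw [habs] at this; exact lt_irrefl 1 this
  have hmul : z * (starRingEnd ℂ) z = 1 := by
    rw [Complex.mul_conj]
    norm_cast
    rw [Complex.normSq_eq_norm_sq, h1]; norm_num
  exact eq_inv_of_mul_eq_one_right hmul

lemma base_key (p q : ℕ) (hp : 0 < p) (hq : 0 < q) (hpq : Nat.Coprime p q)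
    (c d e f : ℂ) (hc : c ^ p = 1) (hd : d ^ p = 1) (he : e ^ q = 1) (hf : f ^ q = 1)
    (heq : c * f = d * e) : c = d ∧ e = f := by
  have hc0 : c ≠ 0 := root_ne_zero p hp c hc
  have he0 : e ≠ 0 := root_ne_zero q hq e he
  set u := d * c⁻¹ with hu
  have hup : u ^ p = 1 := by
    rw [hu, mul_pow, inv_pow, hd, hc]; simp
  have huv : u = f * e⁻¹ := by
    rw [hu]; field_simp; linear_combination -heq
  have huq : u ^ q = 1 := by
    rw [huv, mul_pow, inv_pow, hf, he]; simp
  have h1 : u = 1 := eq_one_of_pows p q hpq u hup huq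
  constructor
  · exact ((mul_inv_eq_one₀ hc0).mp (hu ▸ h1)).symm
  · have h2 : f * e⁻¹ = 1 := huv ▸ h1
    exact ((mul_inv_eq_one₀ he0).mp h2).symm

lemma cancel_key (p q : ℕ) (hp : 0 < p) (hq : 0 < q) (hpq : Nat.Coprime p q)
    (a b c d e f : ℂ) (ha : a ^ p = 1) (hc : c ^ p = 1) (hd : d ^ p = 1)
    (hb : b ^ q = 1) (he : e ^ q = 1) (hf : f ^ q = 1)
    (heq : b * (c - d) = a * (e - f)) : c = d ∧ e = f := by
  have ha0 : a ≠ 0 := root_ne_zero p hp a ha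
  have hc0 : c ≠ 0 := root_ne_zero p hp c hc
  have hd0 : d ≠ 0 := root_ne_zero p hp d hd
  have hb0 : b ≠ 0 := root_ne_zero q hq b hb
  have he0 : e ≠ 0 := root_ne_zero q hq e he
  have hf0 : f ≠ 0 := root_ne_zero q hq f hf
  have hconj := congrArg (starRingEnd ℂ) heq
  simp only [map_mul, map_sub] at hconj
  rw [conj_eq_inv p hp a ha, conj_eq_inv p hp c hc, conj_eq_inv p hp d hd,
      conj_eq_inv q hq b hb, conj_eq_inv q hq e he, conj_eq_inv q hq f hf] at hconj
  have hm : (b * (c - d)) * (b⁻¹ * (c⁻¹ - d⁻¹)) = (a * (e - f)) * (a⁻¹ * (e⁻¹ - f⁻¹)) := by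
    rw [heq, hconj]
  have E : (c - d) ^ 2 * (e * f) = (e - f) ^ 2 * (c * d) := by
    field_simp at hm
    have h2 : (a * b) * ((c - d) ^ 2 * (e * f)) = (a * b) * ((e - f) ^ 2 * (c * d)) := by
      linear_combination (-(a * b)) * hm
    exact mul_left_cancel₀ (mul_ne_zero ha0 hb0) h2
  set u := d * c⁻¹ with hu
  set v := f * e⁻¹ with hv
  have hup : u ^ p = 1 := by rw [hu, mul_pow, inv_pow, hd, hc]; simp
  have hvq : v ^ q = 1 := by rw [hv, mul_pow, inv_pow, hf, he]; simp
  have hu0 : u ≠ 0 := root_ne_zero p hp u hup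
  have huv : (u - v) * (u * v - 1) = 0 := by
    have h2 : (d * e - f * c) * (d * f - c * e) = 0 := by linear_combination E
    have h3 : (u - v) * (u * v - 1) = (d * e - f * c) * (d * f - c * e) / (c ^ 2 * e ^ 2) := by
      rw [hu, hv]; field_simp
    rw [h3, h2, zero_div]
  have hu1 : u = 1 := by
    rcases mul_eq_zero.mp huv with h | h
    · have huv' : u = v := sub_eq_zero.mp h
      exact eq_one_of_pows p q hpq u hup (huv' ▸ hvq)
    · have hv' : v = u⁻¹ := eq_inv_of_mul_eq_one_right (sub_eq_zero.mp h)
      have huq : u ^ q = 1 := by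
        have := hvq; rw [hv', inv_pow, inv_eq_one] at this; exact this
      exact eq_one_of_pows p q hpq u hup huq
  have hv1 : v = 1 := by
    rcases mul_eq_zero.mp huv with h | h
    · rw [← sub_eq_zero.mp h, hu1]
    · rw [eq_inv_of_mul_eq_one_right (sub_eq_zero.mp h), hu1, inv_one]
  constructor
  · exact ((mul_inv_eq_one₀ hc0).mp (hu ▸ hu1)).symm
  · exact ((mul_inv_eq_one₀ he0).mp (hv ▸ hv1)).symm

noncomputable def seqPoly {K : ℕ} (s : Fin K → ℂ) : Polynomial ℂ :=
  ∑ i : Fin K, Polynomial.C (s i) * Polynomial.X ^ (i : ℕ)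

lemma seqPoly_coeff {K : ℕ} (s : Fin K → ℂ) (n : ℕ) :
    (seqPoly s).coeff n = if h : n < K then s ⟨n, h⟩ else 0 := by
  unfold seqPoly
  rw [Polynomial.finset_sum_coeff]
  simp only [Polynomial.coeff_C_mul, Polynomial.coeff_X_pow, mul_ite, mul_one, mul_zero]
  by_cases h : n < K
  · rw [dif_pos h, Finset.sum_eq_single (⟨n, h⟩ : Fin K)]
    · simp
    · intro b _ hb
      rw [if_neg]
      intro hnb
      exact hb (by ext; simp [hnb.symm])
    · simp
  · rw [dif_neg h, Finset.sum_eq_zero]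
    intro b _
    rw [if_neg]
    intro hnb
    exact h (hnb ▸ b.isLt)

lemma conv_coeff {K L : ℕ} (s : Fin K → ℂ) (t : Fin L → ℂ) (n : ℕ) :
    (seqPoly s * seqPoly t).coeff n = ∑ j : Fin L, toeplitzEntry s n (j : ℕ) * t j := by
  classical
  set F : ℕ → ℂ := fun j => toeplitzEntry s n j * (if hj : j < L then t ⟨j, hj⟩ else 0) with hF
  have e1 : (seqPoly s * seqPoly t).coeff n = ∑ j ∈ Finset.range (n + 1), F j := by
    rw [mul_comm, Polynomial.coeff_mul, Finset.Nat.sum_antidiagonal_eq_sum_range_succ_mk]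
    apply Finset.sum_congr rfl
    intro k hk
    rw [Finset.mem_range] at hk
    have hkn : k ≤ n := by omega
    rw [seqPoly_coeff, seqPoly_coeff, hF]
    simp only [toeplitzEntry]
    by_cases h1 : n - k < K <;> by_cases h2 : k < L <;>
      simp [h1, h2, hkn] <;> ring
  have e2 : ∑ j : Fin L, toeplitzEntry s n (j : ℕ) * t j = ∑ j ∈ Finset.range L, F j := by
    rw [← Fin.sum_univ_eq_sum_range]
    apply Finset.sum_congr rfl
    intro j _
    rw [hF]
    simp [j.isLt]
  rw [e1, e2]
  have big1 : ∑ j ∈ Finset.range (n + 1), F j = ∑ j ∈ Finset.range (n + 1 + L), F j := by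
    apply Finset.sum_subset
    · apply Finset.range_subset_range.mpr; omega
    · intro j _ hj
      rw [Finset.mem_range, not_lt] at hj
      have hz : toeplitzEntry s n j = 0 := by
        apply dif_neg
        omega
      simp [hF, hz]
  have big2 : ∑ j ∈ Finset.range L, F j = ∑ j ∈ Finset.range (n + 1 + L), F j := by
    apply Finset.sum_subset
    · apply Finset.range_subset_range.mpr; omega
    · intro j _ hj
      rw [Finset.mem_range, not_lt] at hj
      simp [hF, dif_neg (not_lt.mpr hj)]
  rw [big1, big2]

lemma tE_pos {K : ℕ} (s : Fin K → ℂ) {n j : ℕ} (h1 : j ≤ n) (h2 : n - j < K) :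
    toeplitzEntry s n j = s ⟨n - j, h2⟩ := dif_pos ⟨h1, h2⟩

lemma coeff_induction (p q K : ℕ) (hp : 0 < p) (hq : 0 < q) (hpq : Nat.Coprime p q)
    (hK : 0 < K) (x xt y yt : Fin K → ℂ)
    (hx : ∀ i, x i ^ p = 1) (hxt : ∀ i, xt i ^ p = 1)
    (hy : ∀ i, y i ^ q = 1) (hyt : ∀ i, yt i ^ q = 1)
    (hxy : seqPoly x * seqPoly yt = seqPoly xt * seqPoly y) :
    x = xt ∧ y = yt := by
  classical
  have key : ∀ n : ℕ, ∀ hn : n < K,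
      x ⟨n, hn⟩ = xt ⟨n, hn⟩ ∧ y ⟨n, hn⟩ = yt ⟨n, hn⟩ := by
    intro n
    induction n using Nat.strong_induction_on with
    | _ n IH =>
      intro hn
      have hc := congrArg (fun P => Polynomial.coeff P n) hxy
      simp only [conv_coeff] at hc
      set f : Fin K → ℂ :=
        fun j => toeplitzEntry x n (j : ℕ) * yt j - toeplitzEntry xt n (j : ℕ) * y j with hf
      have hsum : ∑ j : Fin K, f j = 0 := by
        rw [hf]
        rw [Finset.sum_sub_distrib, hc, sub_self]
      by_cases hn0 : n = 0
      · subst hn0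
        have hone : ∑ j : Fin K, f j = f ⟨0, hK⟩ := by
          apply Finset.sum_eq_single
          · intro b _ hb
            have hb0 : (b : ℕ) ≠ 0 := by
              intro h0; exact hb (by ext; simp [h0])
            have hz1 : toeplitzEntry x 0 (b : ℕ) = 0 := dif_neg (by omega)
            have hz2 : toeplitzEntry xt 0 (b : ℕ) = 0 := dif_neg (by omega)
            simp [hf, hz1, hz2]
          · intro habs; exact absurd (Finset.mem_univ _) habs
        rw [hone] at hsum
        rw [hf] at hsum
        simp only [tE_pos x (le_refl 0) (by omega : 0 - 0 < K),
          tE_pos xt (le_refl 0) (by omega : 0 - 0 < K)] at hsum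
        have heq : x ⟨0, hK⟩ * yt ⟨0, hK⟩ = xt ⟨0, hK⟩ * y ⟨0, hK⟩ := by
          linear_combination hsum
        exact base_key p q hp hq hpq _ _ _ _ (hx _) (hxt _) (hy _) (hyt _) heq
      · -- n > 0
        have hnpos : 0 < n := Nat.pos_of_ne_zero hn0
        set j0 : Fin K := ⟨0, hK⟩ with hj0
        set jn : Fin K := ⟨n, hn⟩ with hjn
        have hne : j0 ≠ jn := by
          intro hcon
          have := congrArg Fin.val hcon
          simp [hj0, hjn] at this
          omega
        have hpair : ∑ j ∈ ({j0, jn} : Finset (Fin K)), f j = ∑ j : Fin K, f j := by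
          apply Finset.sum_subset (Finset.subset_univ _)
          intro j _ hj
          simp only [Finset.mem_insert, Finset.mem_singleton] at hj
          push_neg at hj
          obtain ⟨hj1, hj2⟩ := hj
          have hv0 : (j : ℕ) ≠ 0 := by
            intro h0; exact hj1 (by ext; simp [hj0, h0])
          have hvn : (j : ℕ) ≠ n := by
            intro h0; exact hj2 (by ext; simp [hjn, h0])
          by_cases hjle : (j : ℕ) ≤ n
          · -- 0 < j < n
            have hjlt : (j : ℕ) < n := lt_of_le_of_ne hjle hvn
            have hsub : n - (j : ℕ) < K := by omega
            have hsubn : n - (j : ℕ) < n := by omega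
            have IH1 := IH (n - (j : ℕ)) hsubn hsub
            have IH2 := IH (j : ℕ) hjlt j.isLt
            rw [hf]
            simp only [tE_pos x hjle hsub, tE_pos xt hjle hsub]
            have hyj : y j = yt j := by
              have := IH2.2
              simpa [Fin.eta] using this
            rw [IH1.1, hyj, sub_self]
          · have hz1 : toeplitzEntry x n (j : ℕ) = 0 := dif_neg (by omega)
            have hz2 : toeplitzEntry xt n (j : ℕ) = 0 := dif_neg (by omega)
            simp [hf, hz1, hz2]
        rw [Finset.sum_pair hne] at hpair
        rw [hsum] at hpair
        have IH0 := IH 0 hnpos hK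
        simp only [hf] at hpair
        have e1 : toeplitzEntry x n ((j0 : Fin K) : ℕ) = x jn := by
          have : ((j0 : Fin K) : ℕ) = 0 := rfl
          rw [this, tE_pos x (Nat.zero_le n) (by omega : n - 0 < K)]
          congr 1 <;> simp [Fin.ext_iff]
        have e2 : toeplitzEntry xt n ((j0 : Fin K) : ℕ) = xt jn := by
          rw [show ((j0 : Fin K) : ℕ) = 0 from rfl,
            tE_pos xt (Nat.zero_le n) (by omega : n - 0 < K)]
          congr 1 <;> simp [Fin.ext_iff]
        have e3 : toeplitzEntry x n ((jn : Fin K) : ℕ) = x j0 := by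
          rw [show ((jn : Fin K) : ℕ) = n from rfl,
            tE_pos x (le_refl n) (by omega : n - n < K)]
          congr 1 <;> simp [Fin.ext_iff, hj0]
        have e4 : toeplitzEntry xt n ((jn : Fin K) : ℕ) = xt j0 := by
          rw [show ((jn : Fin K) : ℕ) = n from rfl,
            tE_pos xt (le_refl n) (by omega : n - n < K)]
          congr 1 <;> simp [Fin.ext_iff, hj0]
        rw [e1, e2, e3, e4] at hpair
        have i1 : x j0 = xt j0 := IH0.1
        have i2 : y j0 = yt j0 := IH0.2
        have heq : y j0 * (x jn - xt jn) = x j0 * (y jn - yt jn) := by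
          linear_combination hpair + x jn * i2 - y jn * i1
        exact cancel_key p q hp hq hpq (x j0) (y j0) (x jn) (xt jn) (y jn) (yt jn)
          (hx _) (hx _) (hxt _) (hy _) (hy _) (hyt _) heq
  constructor
  · funext i
    have := (key i.val i.isLt).1
    simpa [Fin.eta] using this
  · funext i
    have := (key i.val i.isLt).2
    simpa [Fin.eta] using this

/-- Unique identifiability (noise-free) of the two-block coprime-PSK blind
channel estimation scheme. -/
theorem blind_unique_identification (p q K L : ℕ) (hp : 0 < p) (hq : 0 < q)
    (hpq : Nat.Coprime p q) (hK : 0 < K) (hL : 0 < L)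
    (x xt y yt : Fin K → ℂ) (h ht : Fin L → ℂ)
    (hx : ∀ i, x i ^ p = 1) (hxt : ∀ i, xt i ^ p = 1)
    (hy : ∀ i, y i ^ q = 1) (hyt : ∀ i, yt i ^ q = 1)
    (hh : h ≠ 0)
    (hu : (toeplitz K L x).mulVec h = (toeplitz K L xt).mulVec ht)
    (hu0 : (toeplitz K L x).mulVec h ≠ 0)
    (hv : (toeplitz K L y).mulVec h = (toeplitz K L yt).mulVec ht) :
    x = xt ∧ y = yt ∧ h = ht := by
  classical
  have hmv : ∀ (s : Fin K → ℂ) (g : Fin L → ℂ) (i : Fin (K + L - 1)),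
      (toeplitz K L s).mulVec g i = (seqPoly s * seqPoly g).coeff i := by
    intro s g i
    rw [conv_coeff]
    simp [Matrix.mulVec, dotProduct, toeplitz]
  have hhigh : ∀ (s : Fin K → ℂ) (g : Fin L → ℂ) (n : ℕ), ¬ n < K + L - 1 →
      (seqPoly s * seqPoly g).coeff n = 0 := by
    intro s g n hn
    rw [conv_coeff]
    apply Finset.sum_eq_zero
    intro j _
    have hj := j.isLt
    have hz : toeplitzEntry s n (j : ℕ) = 0 := dif_neg (by omega)
    rw [hz, zero_mul]
  have Hu : seqPoly x * seqPoly h = seqPoly xt * seqPoly ht := by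
    apply Polynomial.ext
    intro n
    by_cases hn : n < K + L - 1
    · have := congrFun hu ⟨n, hn⟩
      rw [hmv, hmv] at this
      exact this
    · rw [hhigh _ _ _ hn, hhigh _ _ _ hn]
  have Hv : seqPoly y * seqPoly h = seqPoly yt * seqPoly ht := by
    apply Polynomial.ext
    intro n
    by_cases hn : n < K + L - 1
    · have := congrFun hv ⟨n, hn⟩
      rw [hmv, hmv] at this
      exact this
    · rw [hhigh _ _ _ hn, hhigh _ _ _ hn]
  have hPx : seqPoly x ≠ 0 := by
    intro h0
    have hco := seqPoly_coeff x 0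
    rw [h0, Polynomial.coeff_zero, dif_pos hK] at hco
    exact root_ne_zero p hp _ (hx ⟨0, hK⟩) hco.symm
  have hPh : seqPoly h ≠ 0 := by
    intro h0
    apply hh
    funext j
    have hco := seqPoly_coeff h (j : ℕ)
    rw [h0, Polynomial.coeff_zero, dif_pos j.isLt] at hco
    simpa [Fin.eta] using hco.symm
  have hPht : seqPoly ht ≠ 0 := by
    have hne : seqPoly xt * seqPoly ht ≠ 0 := Hu ▸ mul_ne_zero hPx hPh
    exact right_ne_zero_of_mul hne
  have Pxy : seqPoly x * seqPoly yt = seqPoly xt * seqPoly y := by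
    apply mul_right_cancel₀ (mul_ne_zero hPh hPht)
    linear_combination (seqPoly yt * seqPoly ht) * Hu - (seqPoly xt * seqPoly ht) * Hv
  obtain ⟨hxe, hye⟩ := coeff_induction p q K hp hq hpq hK x xt y yt hx hxt hy hyt Pxy
  refine ⟨hxe, hye, ?_⟩
  rw [← hxe] at Hu
  have Phh : seqPoly h = seqPoly ht := mul_left_cancel₀ hPx Hu
  funext j
  have h1 := seqPoly_coeff h (j : ℕ)
  have h2 := seqPoly_coeff ht (j : ℕ)
  rw [Phh] at h1
  rw [h1, dif_pos j.isLt] at h2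
  simpa [Fin.eta] using h2
end

section
/- If z, z̃ ∈ ℂ^K differ first at index k (z_k ≠ z̃_k, z_ℓ = z̃_ℓ for ℓ < k), then the K×K matrix T(z̃)[k:K+k−1] − T(z)[k:K+k−1] is lower triangular with all diagonal entries equal to z̃_k − z_k, hence invertible. -/
/-- Rows `k+1` through `K+k` (0-indexed rows `k,…,K+k−1`) of the banded
Toeplitz matrix of `s`. -/
noncomputable def toeplitzRows (K : ℕ) (s : Fin K → ℂ) (k : ℕ) :
    Matrix (Fin K) (Fin K) ℂ :=
  fun i j => toeplitzEntry s (k + i.val) j.val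

theorem toeplitz_difference_block (K : ℕ) (z zt : Fin K → ℂ) (k : Fin K)
    (hzk : z k ≠ zt k) (hprev : ∀ l : Fin K, l < k → z l = zt l) :
    (∀ i j : Fin K, i < j →
        (toeplitzRows K zt k.val - toeplitzRows K z k.val) i j = 0) ∧
      (∀ i : Fin K,
        (toeplitzRows K zt k.val - toeplitzRows K z k.val) i i = zt k - z k) ∧
      IsUnit (toeplitzRows K zt k.val - toeplitzRows K z k.val).det := by
  have hupper : ∀ i j : Fin K, i < j →
      (toeplitzRows K zt k.val - toeplitzRows K z k.val) i j = 0 := by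
    intro i j hij
    simp only [Matrix.sub_apply, toeplitzRows, toeplitzEntry]
    by_cases h : j.val ≤ k.val + i.val ∧ k.val + i.val - j.val < K
    · rw [dif_pos h, dif_pos h]
      have hlt : k.val + i.val - j.val < k.val := by omega
      rw [← hprev ⟨_, h.2⟩ hlt]
      ring
    · rw [dif_neg h, dif_neg h]; ring
  have hdiag : ∀ i : Fin K,
      (toeplitzRows K zt k.val - toeplitzRows K z k.val) i i = zt k - z k := by
    intro i
    have h : i.val ≤ k.val + i.val ∧ k.val + i.val - i.val < K := by
      constructor
      · omega
      · simp
    have he : (⟨k.val + i.val - i.val, h.2⟩ : Fin K) = k := Fin.ext (by simp)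
    simp only [Matrix.sub_apply, toeplitzRows, toeplitzEntry, dif_pos h, he]
  refine ⟨hupper, hdiag, ?_⟩
  rw [Matrix.det_of_lowerTriangular _ ?_]
  · rw [Finset.prod_congr rfl (fun i _ => hdiag i), Finset.prod_const]
    have : zt k - z k ≠ 0 := sub_ne_zero.mpr (Ne.symm hzk)
    exact (pow_ne_zero _ this).isUnit
  · intro i j hij
    exact hupper i j hij
end
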